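/- G_d(d+1) = (d+1)! - d^2 - 1 for all d ≥ 1. -/

import Mathlib

/-- `σ` has an increasing subsequence of length `k`. -/
def ContainsInc (n k : ℕ) (σ : Equiv.Perm (Fin n)) : Prop :=
  ∃ s : Fin k → Fin n, StrictMono s ∧ StrictMono (fun i => σ (s i))

/-- `B d n`: number of permutations of length `n` containing an increasing
subsequence of length `d`. -/
noncomputable def B (d n : ℕ) : ℕ := Nat.card {σ : Equiv.Perm (Fin n) // ContainsInc n d σ}

/-- `G d n`: number of permutations of length `n` avoiding an increasing
subsequence of length `d`. -/
noncomputable def G (d n : ℕ) : ℕ := Nat.card {σ : Equiv.Perm (Fin n) // ¬ ContainsInc n d σ}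

namespace Stmt15

variable {d : ℕ}

/-- The permutation moving value `v` to position `p`, keeping everything else in order. -/
def Phi (p v : Fin (d + 1)) : Equiv.Perm (Fin (d + 1)) :=
  (finSuccEquiv' p).trans (finSuccEquiv' v).symm

@[simp] lemma Phi_apply_self (p v : Fin (d + 1)) : Phi p v p = v := by
  simp [Phi, finSuccEquiv'_at, finSuccEquiv'_symm_none]

@[simp] lemma Phi_apply_succAbove (p v : Fin (d + 1)) (j : Fin d) :
    Phi p v (p.succAbove j) = v.succAbove j := by
  simp [Phi, finSuccEquiv'_succAbove, finSuccEquiv'_symm_some]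

@[simp] lemma Phi_self (p : Fin (d + 1)) : Phi p p = 1 := by
  ext x; simp [Phi]

/-- Every strictly monotone map `Fin d → Fin (d+1)` is a `succAbove`. -/
lemma exists_eq_succAbove {s : Fin d → Fin (d + 1)} (hs : StrictMono s) :
    ∃ p : Fin (d + 1), s = p.succAbove := by
  classical
  haveI : WellFoundedLT (Fin d) := inferInstance
  have hinj : Function.Injective s := hs.injective
  have hcard : (Finset.univ.image s).card = d := by
    rw [Finset.card_image_of_injective _ hinj, Finset.card_univ, Fintype.card_fin]
  have hcompl : (Finset.univ.image s)ᶜ.card = 1 := by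
    rw [Finset.card_compl, hcard, Fintype.card_fin]
    omega
  obtain ⟨p, hp⟩ := Finset.card_eq_one.mp hcompl
  refine ⟨p, ?_⟩
  have hrange : Set.range s = {p}ᶜ := by
    ext x
    have hx : x ∈ (Finset.univ.image s)ᶜ ↔ x ∈ ({p} : Finset _) := by rw [hp]
    simp only [Finset.mem_compl, Finset.mem_image, Finset.mem_univ, true_and,
      Finset.mem_singleton] at hx
    simp only [Set.mem_range, Set.mem_compl_iff, Set.mem_singleton_iff]
    constructor
    · rintro ⟨j, rfl⟩ hc
      exact (hx.mpr hc) ⟨j, rfl⟩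
    · intro hxp
      by_contra hc
      push_neg at hc
      exact hxp (hx.mp (fun ⟨j, hj⟩ => hc j hj))
  exact (hs.range_inj (Fin.strictMono_succAbove p)).mp
    (by rw [hrange, Fin.range_succAbove])

lemma containsInc_iff (σ : Equiv.Perm (Fin (d + 1))) :
    ContainsInc (d + 1) d σ ↔ ∃ p v, σ = Phi p v := by
  haveI : WellFoundedLT (Fin d) := inferInstance
  constructor
  · rintro ⟨s, hs, hσs⟩
    obtain ⟨p, rfl⟩ := exists_eq_succAbove hs
    set v := σ p with hv
    have hrange : Set.range (fun i => σ (p.succAbove i)) = Set.range v.succAbove := by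
      rw [Fin.range_succAbove]
      ext x
      simp only [Set.mem_range, Set.mem_compl_iff, Set.mem_singleton_iff]
      constructor
      · rintro ⟨j, rfl⟩ h
        exact Fin.succAbove_ne p j (σ.injective h)
      · intro hx
        have hsp : σ.symm x ≠ p := by
          intro h
          apply hx
          rw [hv, ← h]
          simp
        obtain ⟨j, hj⟩ := Fin.exists_succAbove_eq hsp
        exact ⟨j, by rw [hj]; simp⟩
    have heq : (fun i => σ (p.succAbove i)) = v.succAbove :=
      (hσs.range_inj (Fin.strictMono_succAbove v)).mp hrange
    refine ⟨p, v, ?_⟩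
    ext x
    rcases eq_or_ne x p with rfl | hx
    · simp [hv]
    · obtain ⟨j, rfl⟩ := Fin.exists_succAbove_eq hx
      rw [Phi_apply_succAbove, ← heq]
  · rintro ⟨p, v, rfl⟩
    exact ⟨p.succAbove, Fin.strictMono_succAbove p,
      by simpa using Fin.strictMono_succAbove v⟩

lemma phi_fix {p v x : Fin (d + 1)} (hv : (v : ℕ) = (p : ℕ) + 1)
    (hxp : x ≠ p) (hxv : x ≠ v) : Phi p v x = x := by
  obtain ⟨j, rfl⟩ := Fin.exists_succAbove_eq hxp
  rw [Phi_apply_succAbove]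
  rcases lt_or_ge (Fin.castSucc j) p with h | h
  · rw [Fin.succAbove_of_castSucc_lt _ _ h]
    rw [Fin.succAbove_of_castSucc_lt]
    rw [Fin.lt_iff_val_lt_val] at h ⊢
    simp only [Fin.coe_castSucc] at *
    omega
  · rw [Fin.succAbove_of_le_castSucc _ _ h] at hxp hxv ⊢
    rw [Fin.succAbove_of_le_castSucc]
    rw [Fin.le_iff_val_le_val] at h ⊢
    have hne : (j : ℕ) + 1 ≠ (v : ℕ) := fun hc => hxv (Fin.ext (by simpa using hc))
    simp only [Fin.coe_castSucc, Fin.val_succ] at *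
    omega

lemma Phi_inv (p v : Fin (d + 1)) : (Phi p v)⁻¹ = Phi v p := rfl

lemma Phi_swap {p v : Fin (d + 1)} (hv : (v : ℕ) = (p : ℕ) + 1) :
    Phi p v = Equiv.swap p v := by
  have hpv : p ≠ v := fun h => by rw [h] at hv; omega
  have hpd : (p : ℕ) < d := by have := v.isLt; omega
  have h1 : p.succAbove ⟨p, hpd⟩ = v := by
    rw [Fin.succAbove_of_le_castSucc]
    · exact Fin.ext (by simp [hv])
    · rw [Fin.le_iff_val_le_val]; simp
  have h2 : v.succAbove ⟨p, hpd⟩ = p := by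
    rw [Fin.succAbove_of_castSucc_lt]
    · rfl
    · rw [Fin.lt_iff_val_lt_val]; simp [hv]
  ext x
  rcases eq_or_ne x p with rfl | hxp
  · rw [Phi_apply_self, Equiv.swap_apply_left]
  rcases eq_or_ne x v with hxv | hxv
  · have h3 := Phi_apply_succAbove p v ⟨p, hpd⟩
    rw [h1, h2] at h3
    rw [hxv, h3, Equiv.swap_apply_right]
  · rw [phi_fix hv hxp hxv, Equiv.swap_apply_of_ne_of_ne hxp hxv]

lemma Phi_adjacent {p v : Fin (d + 1)} (hv : (v : ℕ) = (p : ℕ) + 1) :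
    Phi p v = Phi v p := by
  rw [Phi_swap hv, ← Phi_inv p v, Phi_swap hv, Equiv.swap_inv]

/-- The set of "bad" pairs: `v = p` or `v = p+1`. -/
def Bad (d : ℕ) (x : Fin (d + 1) × Fin (d + 1)) : Prop :=
  x.2 = x.1 ∨ (x.2 : ℕ) = (x.1 : ℕ) + 1

instance : DecidablePred (Bad d) := fun x => by unfold Bad; infer_instance

def D (d : ℕ) := {x : Fin (d + 1) × Fin (d + 1) // ¬ Bad d x}

instance : Fintype (D d) := by unfold D; infer_instance

def badFun (d : ℕ) : Fin (d + 1) ⊕ Fin d → {x : Fin (d + 1) × Fin (d + 1) // Bad d x}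
  | Sum.inl p => ⟨(p, p), Or.inl rfl⟩
  | Sum.inr j => ⟨(j.castSucc, j.succ), Or.inr (by simp)⟩

lemma badFun_bijective : Function.Bijective (badFun d) := by
  constructor
  · rintro (p | j) (p' | j') h <;>
      simp only [badFun, Subtype.ext_iff, Prod.ext_iff] at h
    · rw [h.1]
    · exfalso
      obtain ⟨h1, h2⟩ := h
      have e1 : (p : ℕ) = j' := by rw [h1]; simp
      have e2 : (p : ℕ) = (j' : ℕ) + 1 := by rw [h2]; simp
      omega
    · exfalso
      obtain ⟨h1, h2⟩ := h
      have e1 : (p' : ℕ) = j := by rw [← h1]; simp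
      have e2 : (p' : ℕ) = (j : ℕ) + 1 := by rw [← h2]; simp
      omega
    · congr 1
      exact Fin.castSucc_injective _ h.1
  · rintro ⟨⟨a, b⟩, hab | hab⟩
    · have hab' : b = a := hab
      refine ⟨Sum.inl a, ?_⟩
      simp only [badFun]
      apply Subtype.ext
      simp [hab']
    · have hab' : (b : ℕ) = (a : ℕ) + 1 := hab
      have ha : (a : ℕ) < d := by have := b.isLt; omega
      refine ⟨Sum.inr ⟨a, ha⟩, ?_⟩
      simp only [badFun]
      apply Subtype.ext
      simp only [Prod.mk.injEq]
      exact ⟨Fin.ext (by simp), Fin.ext (by simp [hab'])⟩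

lemma card_D : Fintype.card (D d) = d ^ 2 := by
  have hbad : Fintype.card {x : Fin (d + 1) × Fin (d + 1) // Bad d x} = 2 * d + 1 := by
    rw [← Fintype.card_congr (Equiv.ofBijective _ (badFun_bijective (d := d)))]
    simp only [Fintype.card_sum, Fintype.card_fin]
    omega
  unfold D
  refine (Fintype.card_congr (β := {x : Fin (d + 1) × Fin (d + 1) // ¬ Bad d x}) (Equiv.refl _)).trans ?_
  rw [Fintype.card_subtype_compl, hbad]
  simp only [Fintype.card_prod, Fintype.card_fin]
  ring_nf
  omega

lemma phi_val_cases {p v p' v' : Fin (d + 1)} (h : Phi p v = Phi p' v')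
    (hlt : (p : ℕ) < (p' : ℕ)) : (v : ℕ) = (p : ℕ) ∨ (v : ℕ) = (p : ℕ) + 1 := by
  have hpd : (p : ℕ) < d := by have := p'.isLt; omega
  set j : Fin d := ⟨p, hpd⟩ with hj
  have hcs : (Fin.castSucc j : Fin (d + 1)) = p := Fin.ext (by simp [hj])
  have hsa : p'.succAbove j = p := by
    rw [Fin.succAbove_of_castSucc_lt, hcs]
    rw [Fin.lt_iff_val_lt_val]
    simpa [hj] using hlt
  have hv : v = v'.succAbove j := by
    have h2 := Phi_apply_succAbove p' v' j
    rw [hsa, ← h, Phi_apply_self] at h2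
    exact h2
  rcases lt_or_ge (Fin.castSucc j) v' with hc | hc
  · left
    rw [hv, Fin.succAbove_of_castSucc_lt _ _ hc]
    simp [hj]
  · right
    rw [hv, Fin.succAbove_of_le_castSucc _ _ hc]
    simp [hj]

def F (d : ℕ) : Option (D d) → {σ : Equiv.Perm (Fin (d + 1)) // ContainsInc (d + 1) d σ}
  | none => ⟨1, (containsInc_iff 1).mpr ⟨0, 0, (Phi_self 0).symm⟩⟩
  | some x => ⟨Phi x.1.1 x.1.2, (containsInc_iff _).mpr ⟨x.1.1, x.1.2, rfl⟩⟩

lemma F_injective : Function.Injective (F d) := by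
  rintro (_ | x) (_ | x') h <;>
    simp only [F, Subtype.mk.injEq] at h
  · rfl
  · exfalso
    have h2 := congr_arg (fun σ : Equiv.Perm (Fin (d + 1)) => σ x'.1.1) h
    simp only [Equiv.Perm.one_apply, Phi_apply_self] at h2
    exact x'.2 (Or.inl h2.symm)
  · exfalso
    have h2 := congr_arg (fun σ : Equiv.Perm (Fin (d + 1)) => σ x.1.1) h
    simp only [Equiv.Perm.one_apply, Phi_apply_self] at h2
    exact x.2 (Or.inl h2)
  · obtain ⟨⟨p, v⟩, hpv⟩ := x
    obtain ⟨⟨p', v'⟩, hpv'⟩ := x'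
    simp only at h
    have hpp : p = p' := by
      by_contra hne
      rcases Nat.lt_or_ge (p : ℕ) (p' : ℕ) with hlt | hge
      · rcases phi_val_cases h hlt with h1 | h1
        · exact hpv (Or.inl (Fin.ext h1))
        · exact hpv (Or.inr h1)
      · have hlt : (p' : ℕ) < (p : ℕ) := by
          rcases Nat.lt_or_ge (p' : ℕ) (p : ℕ) with h2 | h2
          · exact h2
          · exact absurd (Fin.ext (by omega : (p : ℕ) = (p' : ℕ))) hne
        rcases phi_val_cases h.symm hlt with h1 | h1
        · exact hpv' (Or.inl (Fin.ext h1))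
        · exact hpv' (Or.inr h1)
    subst hpp
    have hvv : v = v' := by
      have h2 := congr_arg (fun σ : Equiv.Perm (Fin (d + 1)) => σ p) h
      simpa using h2
    subst hvv
    rfl

lemma F_surjective : Function.Surjective (F d) := by
  rintro ⟨σ, hσ⟩
  obtain ⟨p, v, rfl⟩ := (containsInc_iff σ).mp hσ
  by_cases h1 : v = p
  · refine ⟨none, ?_⟩
    simp only [F, Subtype.mk.injEq]
    rw [h1, Phi_self]
  by_cases h2 : (v : ℕ) = (p : ℕ) + 1
  · have hD : ¬ Bad d (v, p) := by
      rintro (h | h)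
      · exact h1 h.symm
      · simp only at h
        omega
    refine ⟨some ⟨(v, p), hD⟩, ?_⟩
    simp only [F, Subtype.mk.injEq]
    exact (Phi_adjacent h2).symm
  · exact ⟨some ⟨(p, v), fun h => h.elim h1 h2⟩, rfl⟩

end Stmt15

/-- `G_d(d+1) = (d+1)! - d² - 1` for all `d ≥ 1`. -/
theorem stmt15 (d : ℕ) (hd : 1 ≤ d) : G d (d + 1) = Nat.factorial (d + 1) - d ^ 2 - 1 := by
  classical
  open Stmt15 in
  have hB : Nat.card {σ : Equiv.Perm (Fin (d + 1)) // ContainsInc (d + 1) d σ}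
      = d ^ 2 + 1 := by
    rw [Nat.card_congr (Equiv.ofBijective _ ⟨F_injective, F_surjective⟩).symm,
      Nat.card_eq_fintype_card, Fintype.card_option, card_D]
  rw [G, Nat.card_eq_fintype_card, Fintype.card_subtype_compl,
    Fintype.card_perm, Fintype.card_fin, ← Nat.card_eq_fintype_card, hB,
    Nat.sub_sub]
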